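/- arXiv:2011.13589 — 3 statements merged into one kernel-verified Lean document; each statement's English description precedes it below -/
import Mathlib

section
/- Let C = {ω(1), ..., ω(M)} ⊂ B_*(X_A) be a prefix code. Then C has the unique factorization property for finite words (for any admissible word γ there exists η with γη admissible and a unique finite sequence (i_1,...,i_k) with γη = ω(i_1)⋯ω(i_k)) if and only if every point x ∈ X_A admits a unique factorization x = ω(i_1)ω(i_2)ω(i_3)⋯ as an infinite concatenation of words from C. -/
namespace TMS

/-- A `{0,1}` transition matrix on `N` symbols, as a `Bool`-valued function. -/
abbrev Mat (N : ℕ) := Fin N → Fin N → Bool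

/-- A finite word is (locally) admissible: all consecutive transitions are allowed. -/
def Adm {N : ℕ} (A : Mat N) (w : List (Fin N)) : Prop :=
  List.Chain' (fun a b => A a b = true) w

instance {N : ℕ} (A : Mat N) (w : List (Fin N)) : Decidable (Adm A w) :=
  inferInstanceAs (Decidable (List.IsChain _ w))

/-- The one-sided shift space `X_A`. -/
def SSpace {N : ℕ} (A : Mat N) : Set (ℕ → Fin N) :=
  {x | ∀ n, A (x n) (x (n + 1)) = true}

/-- The shift on sequences. -/
def shift {N : ℕ} (x : ℕ → Fin N) : ℕ → Fin N := fun n => x (n + 1)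

/-- The shift as a self-map of the shift space. -/
def shiftS {N : ℕ} (A : Mat N) (x : ↥(SSpace A)) : ↥(SSpace A) :=
  ⟨shift x.1, fun n => x.2 (n + 1)⟩

/-- `x` begins with the finite word `w`. -/
def Begins {N : ℕ} (x : ℕ → Fin N) (w : List (Fin N)) : Prop :=
  ∀ i (h : i < w.length), x i = w.get ⟨i, h⟩

/-- A word belongs to `B_*(X_A)`: it occurs at the beginning of some point of `X_A`. -/
def AdmX {N : ℕ} (A : Mat N) (w : List (Fin N)) : Prop :=
  ∃ x ∈ SSpace A, Begins x w

/-- The cylinder set `U_w ⊂ X_A`. -/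
def Cyl {N : ℕ} (A : Mat N) (w : List (Fin N)) : Set (ℕ → Fin N) :=
  {x ∈ SSpace A | Begins x w}

/-- A finite family of words is a prefix code: the words are pairwise distinct and
no word is an initial segment of another. -/
def IsPrefixCode {N M : ℕ} (ω : Fin M → List (Fin N)) : Prop :=
  Function.Injective ω ∧ ∀ i j : Fin M, i ≠ j → ¬ (ω i <+: ω j)

/-- Starting position of the `n`-th block in the factorization of a point along
the index sequence `f`. -/
def pos {N M : ℕ} (ω : Fin M → List (Fin N)) (f : ℕ → Fin M) : ℕ → ℕ
  | 0 => 0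
  | n + 1 => pos ω f n + (ω (f n)).length

/-- The point `x` factors as the infinite concatenation `ω (f 0) ω (f 1) ⋯`. -/
def Factors {N M : ℕ} (ω : Fin M → List (Fin N)) (x : ℕ → Fin N) (f : ℕ → Fin M) : Prop :=
  ∀ n, Begins (fun k => x (pos ω f n + k)) (ω (f n))

/-- Matrix irreducibility: from any symbol there is an admissible path to any other. -/
def IrreducibleMat {N : ℕ} (A : Mat N) : Prop :=
  ∀ i j : Fin N, ∃ w : List (Fin N), Adm A (i :: (w ++ [j]))

/-- Permutation matrix: every row and every column has exactly one nonzero entry. -/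
def IsPermMat {N : ℕ} (A : Mat N) : Prop :=
  (∀ i, ∃! j, A i j = true) ∧ (∀ j, ∃! i, A i j = true)

/-- A right Markov code for `(X_A, σ_A)`: a prefix code of nonempty admissible words
with the unique factorization property, shift invariance, and irreducibility. -/
structure IsRightMarkovCode {N M : ℕ} (A : Mat N) (ω : Fin M → List (Fin N)) : Prop where
  adm : ∀ i, AdmX A (ω i)
  ne : ∀ i, ω i ≠ []
  prefixCode : IsPrefixCode ω
  uniqueFact : ∀ γ, AdmX A γ → ∃ η, AdmX A (γ ++ η) ∧
      ∃! l : List (Fin M), γ ++ η = (l.map ω).flatten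
  shiftInv : ∃ L : ℕ, 0 < L ∧ ∀ l : List (Fin M), l.length = L → AdmX A ((l.map ω).flatten) →
      ∃ l' : List (Fin M), ((l.map ω).flatten).tail = (l'.map ω).flatten
  irr : ∀ i j, ∃ l : List (Fin M), AdmX A (ω i ++ (l.map ω).flatten ++ ω j)

/-- The induced matrix `A(C)`: `A(C)(i,j) = 1` iff `ω i ω j` is admissible. -/
def matC {N M : ℕ} (A : Mat N) (ω : Fin M → List (Fin N)) : Mat M :=
  fun i j => decide (Adm A (ω i ++ ω j))

/-- Continuous orbit equivalence of one-sided topological Markov shifts. -/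
def COE {N N' : ℕ} (A : Mat N) (B : Mat N') : Prop :=
  ∃ h : ↥(SSpace A) ≃ₜ ↥(SSpace B),
    (∃ k₁ l₁ : ↥(SSpace A) → ℕ, Continuous k₁ ∧ Continuous l₁ ∧
      ∀ x, (shiftS B)^[k₁ x] (h (shiftS A x)) = (shiftS B)^[l₁ x] (h x)) ∧
    (∃ k₂ l₂ : ↥(SSpace B) → ℕ, Continuous k₂ ∧ Continuous l₂ ∧
      ∀ y, (shiftS A)^[k₂ y] (h.symm (shiftS B y)) = (shiftS A)^[l₂ y] (h.symm y))

section Aux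

variable {N M : ℕ} {A : Mat N} {ω : Fin M → List (Fin N)}

lemma begins_of_prefix {x : ℕ → Fin N} {u v : List (Fin N)}
    (hv : Begins x v) (h : u <+: v) : Begins x u := by
  obtain ⟨t, rfl⟩ := h
  intro i hi
  have hi' : i < (u ++ t).length := by
    simp only [List.length_append]; omega
  have := hv i hi'
  rw [this]
  simp [List.get_eq_getElem, List.getElem_append_left hi]

lemma begins_prefix {x : ℕ → Fin N} {u v : List (Fin N)}
    (hu : Begins x u) (hv : Begins x v) (h : u.length ≤ v.length) : u <+: v := by
  have : u = v.take u.length := by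
    apply List.ext_getElem
    · simp [Nat.min_eq_left h]
    · intro i h1 h2
      have hiv : i < v.length := lt_of_lt_of_le h1 h
      have e1 := hu i h1
      have e2 := hv i hiv
      simp only [List.get_eq_getElem] at e1 e2
      rw [List.getElem_take, ← e2, ← e1]
  rw [this]
  exact List.take_prefix _ _

lemma begins_append {x : ℕ → Fin N} {u v : List (Fin N)} :
    Begins x (u ++ v) ↔ Begins x u ∧ Begins (fun k => x (u.length + k)) v := by
  constructor
  · intro h
    refine ⟨begins_of_prefix h ⟨v, rfl⟩, ?_⟩
    intro i hi
    have hlt : u.length + i < (u ++ v).length := by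
      simp only [List.length_append]; omega
    show x (u.length + i) = v.get ⟨i, hi⟩
    have := h (u.length + i) hlt
    rw [this]
    simp [List.get_eq_getElem, List.getElem_append_right (Nat.le_add_right _ _)]
  · rintro ⟨h1, h2⟩ i hi
    simp only [List.length_append] at hi
    by_cases hc : i < u.length
    · have := h1 i hc
      rw [this]
      simp [List.get_eq_getElem, List.getElem_append_left hc]
    · push_neg at hc
      have hi2 : i - u.length < v.length := by omega
      have := h2 (i - u.length) hi2
      simp only at this
      have heq : u.length + (i - u.length) = i := by omega
      rw [heq] at this
      rw [this]
      simp only [List.get_eq_getElem]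
      rw [List.getElem_append_right hc]

lemma shift_mem {x : ℕ → Fin N} (hx : x ∈ SSpace A) (m : ℕ) :
    (fun k => x (m + k)) ∈ SSpace A := by
  intro n
  have := hx (m + n)
  simpa [Nat.add_assoc] using this

lemma flatten_map_inj (hne : ∀ i, ω i ≠ []) (hpc : IsPrefixCode ω) :
    ∀ l l' : List (Fin M), (l.map ω).flatten = (l'.map ω).flatten → l = l' := by
  intro l
  induction l with
  | nil =>
    intro l' h
    cases l' with
    | nil => rfl
    | cons j t =>
      exfalso
      simp only [List.map_nil, List.flatten_nil, List.map_cons, List.flatten_cons] at h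
      exact hne j (List.append_eq_nil_iff.mp h.symm).1
  | cons i t ih =>
    intro l' h
    cases l' with
    | nil =>
      exfalso
      simp only [List.map_nil, List.flatten_nil, List.map_cons, List.flatten_cons] at h
      exact hne i (List.append_eq_nil_iff.mp h).1
    | cons j t' =>
      simp only [List.map_cons, List.flatten_cons] at h
      have hij : i = j := by
        by_contra hij
        have c := List.prefix_or_prefix_of_prefix
          (⟨(t.map ω).flatten, rfl⟩ : ω i <+: ω i ++ (t.map ω).flatten)
          (⟨(t'.map ω).flatten, h.symm⟩ : ω j <+: ω i ++ (t.map ω).flatten)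
        rcases c with c | c
        · exact hpc.2 i j hij c
        · exact hpc.2 j i (Ne.symm hij) c
      subst hij
      have ht := List.append_cancel_left h
      rw [ih _ ht]

lemma pos_congr {f g : ℕ → Fin M} {n : ℕ} (h : ∀ m < n, f m = g m) :
    pos ω f n = pos ω g n := by
  induction n with
  | zero => rfl
  | succ n ih =>
    simp only [pos]
    rw [ih (fun m hm => h m (Nat.lt_succ_of_lt hm)), h n (Nat.lt_succ_self n)]

lemma len_flatten_range (f : ℕ → Fin M) (n : ℕ) :
    ((((List.range n).map f).map ω).flatten).length = pos ω f n := by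
  induction n with
  | zero => rfl
  | succ n ih =>
    rw [List.range_succ]
    simp only [List.map_append, List.flatten_append, List.length_append, List.map_cons,
      List.map_nil, List.flatten_cons, List.flatten_nil, List.append_nil]
    rw [ih]
    rfl

lemma pos_lower (hne : ∀ i, ω i ≠ []) (f : ℕ → Fin M) (n : ℕ) : n ≤ pos ω f n := by
  induction n with
  | zero => exact Nat.zero_le _
  | succ n ih =>
    have : 0 < (ω (f n)).length := List.length_pos_iff.mpr (hne (f n))
    simp only [pos]
    omega

lemma factors_begins {x : ℕ → Fin N} {f : ℕ → Fin M} (hf : Factors ω x f) (n : ℕ) :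
    Begins x ((((List.range n).map f).map ω).flatten) := by
  induction n with
  | zero => intro i hi; simp at hi
  | succ n ih =>
    rw [List.range_succ]
    simp only [List.map_append, List.flatten_append, List.map_cons, List.map_nil,
      List.flatten_cons, List.flatten_nil, List.append_nil]
    rw [begins_append]
    refine ⟨ih, ?_⟩
    rw [len_flatten_range]
    exact hf n

/-- Unique factorization of finite words gives: every point of the shift space
begins with some code word. -/
lemma first_block (hne : ∀ i, ω i ≠ [])
    (hUF : ∀ γ, AdmX A γ → ∃ η, AdmX A (γ ++ η) ∧
        ∃! l : List (Fin M), γ ++ η = (l.map ω).flatten)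
    {y : ℕ → Fin N} (hy : y ∈ SSpace A) : ∃ i, Begins y (ω i) := by
  classical
  obtain ⟨L, hL⟩ : ∃ L, L = (Finset.univ.sup fun i : Fin M => (ω i).length) + 1 := ⟨_, rfl⟩
  obtain ⟨γ, hγ⟩ : ∃ γ, γ = List.ofFn (fun j : Fin L => y j) := ⟨_, rfl⟩
  have hγlen : γ.length = L := by simp [hγ]
  have hbγ : Begins y γ := by
    intro i hi
    subst hγ
    simp [List.get_ofFn]
  obtain ⟨η, hadmγη, l, hl, -⟩ := hUF γ ⟨y, hy, hbγ⟩
  cases l with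
  | nil =>
    exfalso
    simp only [List.map_nil, List.flatten_nil, List.append_eq_nil_iff] at hl
    have : γ.length = 0 := by rw [hl.1]; rfl
    omega
  | cons i t =>
    refine ⟨i, ?_⟩
    simp only [List.map_cons, List.flatten_cons] at hl
    have hlen : (ω i).length ≤ γ.length := by
      have : (ω i).length ≤ Finset.univ.sup fun i : Fin M => (ω i).length :=
        Finset.le_sup (f := fun i : Fin M => (ω i).length) (Finset.mem_univ i)
      omega
    have hpre : ω i <+: γ := by
      have h1 : ω i = List.take (ω i).length (γ ++ η) :=
        List.prefix_iff_eq_take.mp ⟨(t.map ω).flatten, hl.symm⟩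
      rw [List.take_append_of_le_length hlen] at h1
      rw [h1]
      exact List.take_prefix _ _
    exact begins_of_prefix hbγ hpre

end Aux

/-- For a prefix code, the finite unique factorization property holds
iff every point of `X_A` admits a unique infinite factorization into code words. -/
theorem uniqueFact_iff_point_factorization {N M : ℕ} (A : Mat N)
    (hA : IrreducibleMat A) (hnp : ¬ IsPermMat A)
    (ω : Fin M → List (Fin N)) (hadm : ∀ i, AdmX A (ω i)) (hne : ∀ i, ω i ≠ [])
    (hpc : IsPrefixCode ω) :
    (∀ γ, AdmX A γ → ∃ η, AdmX A (γ ++ η) ∧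
        ∃! l : List (Fin M), γ ++ η = (l.map ω).flatten) ↔
      (∀ x ∈ SSpace A, ∃! f : ℕ → Fin M, Factors ω x f) := by
  classical
  constructor
  · -- finite UFP → every point factors uniquely
    intro hUF x hx
    -- existence: build the factorization by repeatedly stripping the first block
    have hfb : ∀ y : ↥(SSpace A), ∃ i, Begins y.1 (ω i) := fun y =>
      first_block hne hUF y.2
    choose idx hidx using hfb
    let step : ↥(SSpace A) → ↥(SSpace A) := fun y =>
      ⟨fun k => y.1 ((ω (idx y)).length + k), shift_mem y.2 _⟩
    let orb : ℕ → ↥(SSpace A) := fun n => step^[n] ⟨x, hx⟩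
    let f : ℕ → Fin M := fun n => idx (orb n)
    have horb : ∀ n, (orb n).1 = fun k => x (pos ω f n + k) := by
      intro n
      induction n with
      | zero =>
        funext k
        simp [orb, pos]
      | succ n ih =>
        have hstep : orb (n + 1) = step (orb n) := by
          simp only [orb, Function.iterate_succ_apply']
        funext k
        rw [hstep]
        show (orb n).1 ((ω (idx (orb n))).length + k) = x (pos ω f (n + 1) + k)
        rw [ih]
        show x (pos ω f n + ((ω (f n)).length + k)) = x (pos ω f (n + 1) + k)
        congr 1
        simp only [pos]
        omega
    have hf : Factors ω x f := by
      intro n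
      have := hidx (orb n)
      rw [horb n] at this
      exact this
    refine ⟨f, hf, ?_⟩
    -- uniqueness of the infinite factorization (from the prefix code property)
    intro g hg
    have key : ∀ n, (∀ m < n, g m = f m) → g n = f n := by
      intro n ihm
      have hp : pos ω g n = pos ω f n := pos_congr ihm
      have h1 : Begins (fun k => x (pos ω f n + k)) (ω (g n)) := by
        have := hg n; rwa [hp] at this
      have h2 : Begins (fun k => x (pos ω f n + k)) (ω (f n)) := hf n
      by_contra hne'
      rcases le_total (ω (g n)).length (ω (f n)).length with hle | hle
      · exact hpc.2 (g n) (f n) hne' (begins_prefix h1 h2 hle)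
      · exact hpc.2 (f n) (g n) (Ne.symm hne') (begins_prefix h2 h1 hle)
    funext n
    induction n using Nat.strong_induction_on with
    | _ n ih => exact key n ih
  · -- point factorization → finite UFP
    intro hP γ hγ
    obtain ⟨x, hx, hbx⟩ := hγ
    obtain ⟨f, hf, -⟩ := hP x hx
    set k := γ.length with hk
    set full := ((((List.range k).map f).map ω).flatten) with hfull
    have hbfull : Begins x full := factors_begins hf k
    have hlen : γ.length ≤ full.length := by
      rw [hfull, len_flatten_range]
      exact le_trans (le_of_eq hk) (pos_lower hne f k)
    obtain ⟨η, hη⟩ := begins_prefix hbx hbfull hlen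
    refine ⟨η, ⟨x, hx, hη ▸ hbfull⟩, (List.range k).map f, by rw [hη], ?_⟩
    intro l' hl'
    apply flatten_map_inj hne hpc
    rw [← hl', hη]

end TMS
end

section
/- The one-sided full N-shift (X_[N], σ_[N]) has only the trivial right Markov code, i.e., any right Markov code for the full N-shift equals the alphabet {1,2,...,N} viewed as the set of words of length 1. -/
namespace TMS

/-- In the full shift every finite word is admissible (occurs at the start of a point). -/
lemma admX_true_of_pos {N : ℕ} (hN : 0 < N) (w : List (Fin N)) :
    AdmX (fun _ _ => true) w := by
  refine ⟨fun n => w.getD n ⟨0, hN⟩, fun n => rfl, fun i h => ?_⟩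
  simp only [List.get_eq_getElem]
  exact List.getD_eq_getElem w _ h

lemma flatten_replicate_replicate {α : Type*} (a : α) (n j : ℕ) :
    (List.replicate n (List.replicate j a)).flatten = List.replicate (n * j) a := by
  induction n with
  | zero => simp
  | succ m ih =>
      rw [List.replicate_succ, List.flatten_cons, ih, Nat.succ_mul, Nat.add_comm,
        List.replicate_add]

/-- Every letter is a code word. -/
lemma singleton_codeword {N M : ℕ} (hN : 2 ≤ N)
    (ω : Fin M → List (Fin N))
    (hC : IsRightMarkovCode (fun _ _ => true) ω) (a : Fin N) :
    ∃ i, ω i = [a] := by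
  have hN0 : 0 < N := by omega
  -- step 1: some code word is a power of `a`
  obtain ⟨ia, j, hj, hia⟩ : ∃ i j, 0 < j ∧ ω i = List.replicate j a := by
    classical
    set K : ℕ := (Finset.univ.sup fun i : Fin M => (ω i).length) + 1 with hK
    obtain ⟨η, -, l, hl, -⟩ :=
      hC.uniqueFact (List.replicate K a) (admX_true_of_pos hN0 _)
    match l, hl with
    | [], hl => simp [hK, List.replicate_succ] at hl
    | i :: l, hl =>
      refine ⟨i, (ω i).length, Nat.pos_of_ne_zero (by simpa using hC.ne i), ?_⟩
      have hpre : ω i <+: List.replicate K a ++ η := ⟨(l.map ω).flatten, by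
        simp only [List.map_cons, List.flatten_cons] at hl
        exact hl.symm⟩
      have hlen : (ω i).length ≤ K := by
        have h2 : (ω i).length ≤ Finset.univ.sup fun i : Fin M => (ω i).length := by
          simpa using Finset.le_sup (f := fun i : Fin M => (ω i).length) (Finset.mem_univ i)
        omega
      have := List.prefix_iff_eq_take.mp hpre
      rwa [List.take_append_of_le_length (by simpa using hlen), List.take_replicate,
        Nat.min_eq_left (by simpa using hlen)] at this
  -- step 2: use shift invariance on `(ω ia)^L`
  obtain ⟨L, hL, hshift⟩ := hC.shiftInv
  obtain ⟨l', hl'⟩ := hshift (List.replicate L ia) (by simp)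
    (admX_true_of_pos hN0 _)
  rw [List.map_replicate, hia, flatten_replicate_replicate, List.tail_replicate] at hl'
  -- every block of l' equals ω ia
  have hblock : ∀ i ∈ l', ω i = ω ia := by
    intro i hi
    have hsub : List.Sublist (ω i) (List.replicate (L * j - 1) a) := by
      rw [hl']; exact List.sublist_flatten_of_mem (List.mem_map_of_mem (f := ω) hi)
    have hrep : ω i = List.replicate (ω i).length a :=
      List.eq_replicate_of_mem fun b hb =>
        List.eq_of_mem_replicate (hsub.subset hb)
    have hne : (ω i).length ≠ 0 := by simpa using hC.ne i
    by_contra hne2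
    have hia' : i ≠ ia := fun h => hne2 (by rw [h])
    rcases Nat.le_total (ω i).length j with h | h
    · exact hC.prefixCode.2 i ia hia' (by
        rw [hrep, hia]
        exact ⟨List.replicate (j - (ω i).length) a, by
          rw [← List.replicate_add]; congr 1; omega⟩)
    · exact hC.prefixCode.2 ia i (fun h' => hia' h'.symm) (by
        rw [hrep, hia]
        exact ⟨List.replicate ((ω i).length - j) a, by
          rw [← List.replicate_add]; congr 1; omega⟩)
  have hmap : l'.map ω = List.replicate l'.length (List.replicate j a) := by
    have h0 : ∀ b ∈ l'.map ω, b = List.replicate j a := by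
      intro b hb
      obtain ⟨i, hi, rfl⟩ := List.mem_map.mp hb
      rw [hblock i hi, hia]
    simpa using List.eq_replicate_of_mem h0
  rw [hmap, flatten_replicate_replicate] at hl'
  have hlen : L * j - 1 = l'.length * j := by
    have := congrArg List.length hl'
    simpa using this
  -- j divides L*j and L*j - 1, hence j = 1
  have hj1 : j = 1 := by
    have h1 : j ∣ L * j - 1 := hlen ▸ dvd_mul_left j l'.length
    have h2 : j ∣ L * j := dvd_mul_left j L
    have h3 : j ∣ 1 := by
      have : L * j - (L * j - 1) = 1 := by
        have : 1 ≤ L * j := Nat.one_le_iff_ne_zero.mpr (by positivity)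
        omega
      exact this ▸ Nat.dvd_sub h2 h1
    exact Nat.dvd_one.mp h3
  exact ⟨ia, by rw [hia, hj1, List.replicate_one]⟩

/-- The one-sided full `N`-shift has only the trivial right Markov code:
any right Markov code equals the alphabet, viewed as the words of length one. -/
theorem full_shift_trivial_code {N M : ℕ} (hN : 2 ≤ N)
    (ω : Fin M → List (Fin N))
    (hC : IsRightMarkovCode (fun _ _ => true) ω) :
    Set.range ω = Set.range (fun a : Fin N => [a]) := by
  ext w
  simp only [Set.mem_range]
  constructor
  · rintro ⟨i, rfl⟩
    match h : ω i, hC.ne i with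
    | b :: t, _ =>
      obtain ⟨i', hi'⟩ := singleton_codeword hN ω hC b
      have hii : i' = i := by
        by_contra hne
        exact hC.prefixCode.2 i' i hne (by rw [hi', h]; exact ⟨t, rfl⟩)
      exact ⟨b, by rw [← hi', hii, h]⟩
  · rintro ⟨a, rfl⟩
    obtain ⟨i, hi⟩ := singleton_codeword hN ω hC a
    exact ⟨i, hi⟩

end TMS
end

section
/- The one-sided golden mean shift (X_{A_1}, σ_{A_1}) with A_1 = [[1,1],[1,0]] is continuously orbit equivalent to the one-sided full 2-shift. -/
namespace TMS

/-- The golden mean matrix `A₁ = [[1,1],[1,0]]`. -/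
def A1 : Mat 2 := fun i j => ![![true, true], ![true, false]] i j

/-- The code `C₁ = {1, 21}` (with symbols `0, 1` standing for `1, 2`). -/
def om1 : Fin 2 → List (Fin 2) := ![[0], [1, 0]]

/-! ### Auxiliary development for Statement 14 -/

/-- Encode a golden-mean point as its sequence of block symbols (`0 ↦ [0]`, `1 ↦ [1,0]`). -/
def enc : (ℕ → Fin 2) → ℕ → Fin 2
  | x, 0 => x 0
  | x, n + 1 => if x 0 = 0 then enc (shift x) n else enc (shift (shift x)) n

/-- Decode a sequence of block symbols back to the concatenation of blocks. -/
def dec : (ℕ → Fin 2) → ℕ → Fin 2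
  | y, 0 => y 0
  | y, 1 => if y 0 = 0 then y 1 else 0
  | y, k + 2 => if y 0 = 0 then dec (shift y) (k + 1) else dec (shift y) k

lemma enc_zero (x : ℕ → Fin 2) : enc x 0 = x 0 := by simp [enc]

lemma enc_succ_of_zero {x : ℕ → Fin 2} (h : x 0 = 0) (n : ℕ) :
    enc x (n + 1) = enc (shift x) n := by simp [enc, h]

lemma enc_succ_of_one {x : ℕ → Fin 2} (h : x 0 = 1) (n : ℕ) :
    enc x (n + 1) = enc (shift (shift x)) n := by simp [enc, h]

lemma dec_zero (y : ℕ → Fin 2) : dec y 0 = y 0 := by simp [dec]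

lemma dec_one_of_one {y : ℕ → Fin 2} (h : y 0 = 1) : dec y 1 = 0 := by simp [dec, h]

lemma fin2_cases (a : Fin 2) : a = 0 ∨ a = 1 := by revert a; decide

lemma dec_succ_of_zero {y : ℕ → Fin 2} (h : y 0 = 0) :
    ∀ k, dec y (k + 1) = dec (shift y) k
  | 0 => by simp [dec, h, shift]
  | k + 1 => by simp [dec, h]

lemma dec_succ2_of_one {y : ℕ → Fin 2} (h : y 0 = 1) (k : ℕ) :
    dec y (k + 2) = dec (shift y) k := by simp [dec, h]

lemma A1_zero_left (b : Fin 2) : A1 0 b = true := by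
  rcases fin2_cases b with h | h <;> subst h <;> decide

lemma A1_one_zero : A1 1 0 = true := by decide

/-- decoded points lie in the golden mean shift space -/
lemma dec_adm : ∀ k (y : ℕ → Fin 2), A1 (dec y k) (dec y (k + 1)) = true := by
  intro k
  induction k using Nat.strong_induction_on with
  | _ k ih =>
    intro y
    match k with
    | 0 =>
      rcases fin2_cases (y 0) with h | h
      · rw [dec_zero, h]; exact A1_zero_left _
      · rw [dec_zero, h, dec_one_of_one h]; exact A1_one_zero
    | 1 =>
      rcases fin2_cases (y 0) with h | h
      · rw [dec_succ_of_zero h 0, dec_succ_of_zero h 1]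
        exact ih 0 (by omega) (shift y)
      · rw [dec_one_of_one h]; exact A1_zero_left _
    | (k + 2) =>
      rcases fin2_cases (y 0) with h | h
      · rw [dec_succ_of_zero h (k + 1), dec_succ_of_zero h (k + 2)]
        exact ih (k + 1) (by omega) (shift y)
      · rw [dec_succ2_of_one h k, show k + 2 + 1 = (k + 1) + 2 from rfl,
          dec_succ2_of_one h (k + 1)]
        exact ih k (by omega) (shift y)

lemma shift_dec_of_zero {y : ℕ → Fin 2} (h : y 0 = 0) :
    shift (dec y) = dec (shift y) := by
  funext k; exact dec_succ_of_zero h k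

lemma shift2_dec_of_one {y : ℕ → Fin 2} (h : y 0 = 1) :
    shift (shift (dec y)) = dec (shift y) := by
  funext k; exact dec_succ2_of_one h k

lemma enc_dec : ∀ n (y : ℕ → Fin 2), enc (dec y) n = y n := by
  intro n
  induction n with
  | zero => intro y; rw [enc_zero, dec_zero]
  | succ n ih =>
    intro y
    rcases fin2_cases (y 0) with h | h
    · rw [enc_succ_of_zero (by rw [dec_zero]; exact h), shift_dec_of_zero h, ih]
      rfl
    · rw [enc_succ_of_one (by rw [dec_zero]; exact h), shift2_dec_of_one h, ih]
      rfl

lemma adm_shift {x : ℕ → Fin 2} (hx : x ∈ SSpace A1) : shift x ∈ SSpace A1 :=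
  fun n => hx (n + 1)

lemma adm_next_zero {x : ℕ → Fin 2} (hx : x ∈ SSpace A1) {n : ℕ} (h : x n = 1) :
    x (n + 1) = 0 := by
  rcases fin2_cases (x (n + 1)) with h' | h'
  · exact h'
  · have := hx n; rw [h, h'] at this; exact absurd this (by decide)

lemma shift_enc_of_zero {x : ℕ → Fin 2} (h : x 0 = 0) :
    shift (enc x) = enc (shift x) := by
  funext n; exact enc_succ_of_zero h n

lemma shift_enc_of_one {x : ℕ → Fin 2} (h : x 0 = 1) :
    shift (enc x) = enc (shift (shift x)) := by
  funext n; exact enc_succ_of_one h n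

lemma dec_enc : ∀ k (x : ℕ → Fin 2), x ∈ SSpace A1 → dec (enc x) k = x k := by
  intro k
  induction k using Nat.strong_induction_on with
  | _ k ih =>
    intro x hx
    match k with
    | 0 => rw [dec_zero, enc_zero]
    | (m + 1) =>
      rcases fin2_cases (x 0) with h | h
      · have he : enc x 0 = 0 := by rw [enc_zero]; exact h
        rw [dec_succ_of_zero he m, shift_enc_of_zero h,
          ih m (by omega) (shift x) (adm_shift hx)]
        rfl
      · have he : enc x 0 = 1 := by rw [enc_zero]; exact h
        match m with
        | 0 => rw [dec_one_of_one he, adm_next_zero hx h]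
        | (m + 1) =>
          rw [dec_succ2_of_one he m, shift_enc_of_one h,
            ih m (by omega) (shift (shift x)) (adm_shift (adm_shift hx))]
          rfl

/-- locality of `enc` -/
lemma enc_local : ∀ n (x x' : ℕ → Fin 2), (∀ i, i ≤ 2 * n → x i = x' i) →
    enc x n = enc x' n := by
  intro n
  induction n with
  | zero => intro x x' h; rw [enc_zero, enc_zero]; exact h 0 (le_refl _)
  | succ n ih =>
    intro x x' h
    have h0 : x 0 = x' 0 := h 0 (by omega)
    rcases fin2_cases (x 0) with hz | hz
    · rw [enc_succ_of_zero hz, enc_succ_of_zero (h0 ▸ hz)]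
      exact ih _ _ fun i hi => h (i + 1) (by omega)
    · rw [enc_succ_of_one hz, enc_succ_of_one (h0 ▸ hz)]
      exact ih _ _ fun i hi => h (i + 2) (by omega)

/-- locality of `dec` -/
lemma dec_local : ∀ k (y y' : ℕ → Fin 2), (∀ i, i ≤ k → y i = y' i) →
    dec y k = dec y' k := by
  intro k
  induction k using Nat.strong_induction_on with
  | _ k ih =>
    intro y y' h
    have h0 : y 0 = y' 0 := h 0 (by omega)
    match k with
    | 0 => rw [dec_zero, dec_zero]; exact h0
    | 1 =>
      rcases fin2_cases (y 0) with hz | hz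
      · rw [dec_succ_of_zero hz 0, dec_succ_of_zero (h0 ▸ hz) 0, dec_zero, dec_zero]
        exact h 1 (le_refl _)
      · rw [dec_one_of_one hz, dec_one_of_one (h0 ▸ hz)]
    | (k + 2) =>
      rcases fin2_cases (y 0) with hz | hz
      · rw [dec_succ_of_zero hz (k + 1), dec_succ_of_zero (h0 ▸ hz) (k + 1)]
        exact ih (k + 1) (by omega) _ _ fun i hi => h (i + 1) (by omega)
      · rw [dec_succ2_of_one hz k, dec_succ2_of_one (h0 ▸ hz) k]
        exact ih k (by omega) _ _ fun i hi => h (i + 1) (by omega)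

/-- A map of sequence spaces whose coordinates depend on finitely many inputs is continuous. -/
lemma cont_of_local (F : (ℕ → Fin 2) → ℕ → Fin 2) (m : ℕ → ℕ)
    (hF : ∀ n (x x' : ℕ → Fin 2), (∀ i, i ≤ m n → x i = x' i) → F x n = F x' n) :
    Continuous F := by
  apply continuous_pi
  intro n
  have key : (fun x => F x n) =
      (fun v : Fin (m n + 1) → Fin 2 =>
        F (fun i => if h : i < m n + 1 then v ⟨i, h⟩ else 0) n) ∘
      (fun x (i : Fin (m n + 1)) => x i.1) := by
    funext x
    exact hF n x _ fun i hi => by simp [Nat.lt_succ_of_le hi]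
  rw [key]
  exact Continuous.comp continuous_of_discreteTopology
    (continuous_pi fun i => continuous_apply i.1)

/-- The one-sided golden mean shift is continuously orbit equivalent
to the one-sided full 2-shift. -/
theorem goldenMean_COE_full2 : COE A1 ((fun _ _ => true) : Mat 2) := by
  set B : Mat 2 := (fun _ _ => true) with hB
  have memB : ∀ z : ℕ → Fin 2, z ∈ SSpace B := fun z n => rfl
  -- the homeomorphism
  let h : ↥(SSpace A1) ≃ₜ ↥(SSpace B) :=
    { toFun := fun x => ⟨enc x.1, memB _⟩
      invFun := fun y => ⟨dec y.1, fun n => dec_adm n y.1⟩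
      left_inv := fun x => Subtype.ext (funext fun k => dec_enc k x.1 x.2)
      right_inv := fun y => Subtype.ext (funext fun n => enc_dec n y.1)
      continuous_toFun := by
        apply Continuous.subtype_mk
        exact (cont_of_local enc (fun n => 2 * n) enc_local).comp continuous_subtype_val
      continuous_invFun := by
        apply Continuous.subtype_mk
        exact (cont_of_local dec id dec_local).comp continuous_subtype_val }
  refine ⟨h, ⟨fun x => if x.1 0 = 0 then 0 else 1, fun _ => 1, ?_, continuous_const, ?_⟩,
    ⟨fun _ => 0, fun y => if y.1 0 = 0 then 1 else 2, continuous_const, ?_, ?_⟩⟩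
  · -- continuity of k₁
    have : (fun x : ↥(SSpace A1) => if x.1 0 = 0 then (0 : ℕ) else 1) =
        (fun a : Fin 2 => if a = 0 then (0 : ℕ) else 1) ∘ (fun x : ↥(SSpace A1) => x.1 0) :=
      rfl
    rw [this]
    exact Continuous.comp continuous_of_discreteTopology
      ((continuous_apply 0).comp continuous_subtype_val)
  · -- forward cocycle
    intro x
    rcases fin2_cases (x.1 0) with hz | hz
    · simp only [hz, if_pos rfl]
      apply Subtype.ext
      show enc (shift x.1) = shift (enc x.1)
      exact (shift_enc_of_zero hz).symm
    · simp only [hz, reduceIte]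
      apply Subtype.ext
      show shift (enc (shift x.1)) = shift (enc x.1)
      have h1 : (shift x.1) 0 = 0 := adm_next_zero x.2 hz
      rw [shift_enc_of_zero h1, shift_enc_of_one hz]
  · -- continuity of l₂
    have : (fun y : ↥(SSpace B) => if y.1 0 = 0 then (1 : ℕ) else 2) =
        (fun a : Fin 2 => if a = 0 then (1 : ℕ) else 2) ∘ (fun y : ↥(SSpace B) => y.1 0) :=
      rfl
    rw [this]
    exact Continuous.comp continuous_of_discreteTopology
      ((continuous_apply 0).comp continuous_subtype_val)
  · -- backward cocycle
    intro y
    rcases fin2_cases (y.1 0) with hz | hz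
    · simp only [hz, if_pos rfl, Function.iterate_zero, Function.iterate_one, id]
      apply Subtype.ext
      show dec (shift y.1) = shift (dec y.1)
      exact (shift_dec_of_zero hz).symm
    · simp only [hz, reduceIte, Function.iterate_zero, id]
      apply Subtype.ext
      show dec (shift y.1) = shift (shift (dec y.1))
      exact (shift2_dec_of_one hz).symm

end TMS
end
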